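/- arXiv:1706.02690 — 2 statements merged into one kernel-verified Lean document; each statement's English description precedes it below -/
import Mathlib

section
/- For fixed f ∈ ℝ^N (N ≥ 2) and index ŷ maximizing f, the limit as T → ∞ of T·(N − 1/S_ŷ(f;T)) equals Σ_{i≠ŷ} (f_ŷ − f_i), i.e. (N−1)·U₁, where U₁ = (1/(N−1)) Σ_{i≠ŷ} (f_ŷ − f_i). -/
open Filter Finset

lemma key_limit (x : ℝ) :
    Tendsto (fun T : ℝ => T * (1 - Real.exp (x / T))) atTop (nhds (-x)) := by
  by_cases hx : x = 0
  · simpa [hx] using (tendsto_const_nhds :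
      Tendsto (fun _ : ℝ => (0 : ℝ)) atTop (nhds 0))
  · have h0 : Tendsto (fun T : ℝ => x / T) atTop (nhds 0) :=
      tendsto_const_nhds.div_atTop tendsto_id
    have h0' : Tendsto (fun T : ℝ => x / T) atTop (nhdsWithin 0 {0}ᶜ) := by
      refine tendsto_nhdsWithin_of_tendsto_nhds_of_eventually_within _ h0 ?_
      filter_upwards [eventually_gt_atTop (0 : ℝ)] with T hT
      exact div_ne_zero hx (ne_of_gt hT)
    have hslope : Tendsto (slope Real.exp 0) (nhdsWithin 0 {0}ᶜ) (nhds 1) := by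
      have := (hasDerivAt_iff_tendsto_slope).mp (Real.hasDerivAt_exp 0)
      simpa using this
    have hcomp : Tendsto (fun T : ℝ => (Real.exp (x / T) - 1) / (x / T))
        atTop (nhds 1) := by
      refine (hslope.comp h0').congr fun T => ?_
      simp only [slope_fun_def, Function.comp, Real.exp_zero, sub_zero,
        smul_eq_mul, vsub_eq_sub, div_eq_mul_inv, mul_inv_rev, inv_inv]
      ring
    have hfin : Tendsto (fun T : ℝ => -(x * ((Real.exp (x / T) - 1) / (x / T))))
        atTop (nhds (-x)) := by
      simpa using (hcomp.const_mul x).neg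
    refine hfin.congr' ?_
    filter_upwards [eventually_gt_atTop (0 : ℝ)] with T hT
    have hT' : T ≠ 0 := ne_of_gt hT
    field_simp
    ring

theorem temperature_scaled_softmax_limit (N : ℕ) (hN : 2 ≤ N) (f : Fin N → ℝ)
    (y : Fin N) (hmax : ∀ i, f i ≤ f y) :
    Tendsto
      (fun T : ℝ =>
        T * (N - 1 / (1 / (1 + ∑ i ∈ Finset.univ.erase y, Real.exp ((f i - f y) / T)))))
      atTop (nhds (∑ i ∈ Finset.univ.erase y, (f y - f i))) := by
  have hsum : Tendsto
      (fun T : ℝ => ∑ i ∈ Finset.univ.erase y, (T * (1 - Real.exp ((f i - f y) / T))))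
      atTop (nhds (∑ i ∈ Finset.univ.erase y, (f y - f i))) := by
    refine tendsto_finset_sum _ fun i _ => ?_
    simpa [neg_sub] using key_limit (f i - f y)
  refine hsum.congr fun T => ?_
  have hcard : (Finset.univ.erase y).card = N - 1 := by
    simp [Finset.card_erase_of_mem]
  have hcast : ((Finset.univ.erase y).card : ℝ) = (N : ℝ) - 1 := by
    rw [hcard, Nat.cast_sub (by omega)]
    simp
  rw [one_div_one_div]
  simp only [mul_one_sub]
  rw [Finset.sum_sub_distrib, Finset.sum_const, nsmul_eq_mul, hcast, ← Finset.mul_sum]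
  ring
end

section
/- For fixed f ∈ ℝ^N and argmax index ŷ, the second-order expansion S_ŷ(f;T) = 1/(N − ((N−1)/T)·U₁ + ((N−1)/(2T²))·U₂ + r(T)) holds with T²·r(T) → 0 as T → ∞; equivalently, Σ_{j} exp((f_j − f_ŷ)/T) = N − ((N−1)/T)U₁ + ((N−1)/(2T²))U₂ + o(1/T²). -/
open Filter Finset

lemma exp_taylor2_bound {x : ℝ} (hx : |x| ≤ 1) :
    |Real.exp x - (1 + x + x ^ 2 / 2)| ≤ 2/9 * |x| ^ 3 := by
  have h := Real.exp_bound hx (n := 3) (by norm_num)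
  have hs : ∑ i ∈ Finset.range 3, x ^ i / (i.factorial : ℝ) = 1 + x + x ^ 2 / 2 := by
    simp [Finset.sum_range_succ]
  rw [hs] at h
  calc |Real.exp x - (1 + x + x ^ 2 / 2)| ≤ |x| ^ 3 * ((3:ℕ).succ / ((3:ℕ).factorial * 3)) := h
    _ = 2/9 * |x| ^ 3 := by norm_num [Nat.factorial]; ring

lemma key_term (c : ℝ) :
    Tendsto (fun T : ℝ => T ^ 2 * (Real.exp (c / T) - (1 + c / T + (c / T) ^ 2 / 2)))
      atTop (nhds 0) := by
  have hb : Tendsto (fun T : ℝ => 2/9 * |c| ^ 3 / T) atTop (nhds 0) := by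
    have : Tendsto (fun T : ℝ => (2/9 * |c| ^ 3) * T⁻¹) atTop (nhds ((2/9 * |c| ^ 3) * 0)) :=
      tendsto_inv_atTop_zero.const_mul _
    simpa [div_eq_mul_inv] using this
  refine squeeze_zero_norm' ?_ hb
  filter_upwards [eventually_ge_atTop (max 1 |c|), eventually_gt_atTop 0] with T hT hT0
  have hc : |c| ≤ T := le_trans (le_max_right _ _) hT
  have hx : |c / T| ≤ 1 := by
    rw [abs_div, abs_of_pos hT0, div_le_one hT0]; exact hc
  have hbd := exp_taylor2_bound hx
  rw [norm_mul, norm_pow, Real.norm_eq_abs, Real.norm_eq_abs, abs_of_pos hT0]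
  calc T ^ 2 * |Real.exp (c / T) - (1 + c / T + (c / T) ^ 2 / 2)|
      ≤ T ^ 2 * (2/9 * |c / T| ^ 3) := by
        apply mul_le_mul_of_nonneg_left hbd (by positivity)
    _ = 2/9 * |c| ^ 3 / T := by
        rw [abs_div, abs_of_pos hT0]
        field_simp

theorem softmax_second_order_expansion (N : ℕ) (hN : 2 ≤ N) (f : Fin N → ℝ)
    (y : Fin N) (hmax : ∀ i, f i ≤ f y) :
    Tendsto
      (fun T : ℝ =>
        T ^ 2 *
          ((∑ j, Real.exp ((f j - f y) / T)) -
            ((N : ℝ)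
              - (((N : ℝ) - 1) / T) *
                  ((1 / ((N : ℝ) - 1)) * ∑ i ∈ Finset.univ.erase y, (f y - f i))
              + (((N : ℝ) - 1) / (2 * T ^ 2)) *
                  ((1 / ((N : ℝ) - 1)) * ∑ i ∈ Finset.univ.erase y, (f y - f i) ^ 2))))
      atTop (nhds 0) := by
  have hN1 : ((N : ℝ) - 1) ≠ 0 := by
    have : (2:ℝ) ≤ (N:ℝ) := by exact_mod_cast hN
    linarith
  have hsum1 : ∑ i ∈ Finset.univ.erase y, (f y - f i) = - ∑ j, (f j - f y) := by
    rw [Finset.sum_erase _ (by simp), ← Finset.sum_neg_distrib]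
    congr 1; ext j; ring
  have hsum2 : ∑ i ∈ Finset.univ.erase y, (f y - f i) ^ 2 = ∑ j, (f j - f y) ^ 2 := by
    rw [Finset.sum_erase _ (by simp)]
    congr 1; ext j; ring
  have heq : ∀ᶠ T : ℝ in atTop,
      T ^ 2 *
          ((∑ j, Real.exp ((f j - f y) / T)) -
            ((N : ℝ)
              - (((N : ℝ) - 1) / T) *
                  ((1 / ((N : ℝ) - 1)) * ∑ i ∈ Finset.univ.erase y, (f y - f i))
              + (((N : ℝ) - 1) / (2 * T ^ 2)) *
                  ((1 / ((N : ℝ) - 1)) * ∑ i ∈ Finset.univ.erase y, (f y - f i) ^ 2)))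
      = ∑ j, T ^ 2 * (Real.exp ((f j - f y) / T)
          - (1 + (f j - f y) / T + ((f j - f y) / T) ^ 2 / 2)) := by
    filter_upwards [eventually_gt_atTop 0] with T hT0
    have hT : T ≠ 0 := ne_of_gt hT0
    have hterm : ∀ j : Fin N, T ^ 2 * (Real.exp ((f j - f y) / T)
          - (1 + (f j - f y) / T + ((f j - f y) / T) ^ 2 / 2))
        = T ^ 2 * Real.exp ((f j - f y) / T) - T ^ 2 - T * (f j - f y) - (f j - f y) ^ 2 / 2 := by
      intro j; field_simp; ring
    rw [Finset.sum_congr rfl (fun j _ => hterm j)]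
    rw [hsum1, hsum2]
    simp only [Finset.sum_sub_distrib, Finset.sum_const, ← Finset.mul_sum,
      Finset.card_univ, Fintype.card_fin, nsmul_eq_mul, ← Finset.sum_div]
    field_simp
    ring
  rw [tendsto_congr' heq]
  have := tendsto_finset_sum (Finset.univ : Finset (Fin N))
    (fun j _ => key_term (f j - f y))
  simpa using this
end
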